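/- In 𝒱, for all integers x, y and all nonnegative integers β₁,…,β₆ one has k₁^x k₂^y X₁^{β₁}X₂^{β₂}X₃^{β₃}X₄^{β₄}X₅^{β₅}X₆^{β₆} = r^{F} s^{G} X₁^{β₁}X₂^{β₂}X₃^{β₃}X₄^{β₄}X₅^{β₅}X₆^{β₆} k₁^x k₂^y, where F = x(3β₁+2β₂+3β₃+β₄−β₆) + y(6β₁+3β₂+3β₃−3β₅−3β₆) and G = x(3β₁+β₂−β₄−3β₅−2β₆) + y(3β₁−3β₃−3β₄−6β₅−3β₆). -/

import Mathlib

noncomputable section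

open scoped TensorProduct

/-- Generators of the algebra `𝒱 = Ǔ_{r,s}^{≥0}(G₂)`. -/
inductive VGen : Type
  | e1 | e2 | k1 | k1' | k2 | k2'

open FreeAlgebra in
/-- Defining relations of `𝒱 = Ǔ_{r,s}^{≥0}(G₂)`. -/
inductive VRel (r s : ℂ) : FreeAlgebra ℂ VGen → FreeAlgebra ℂ VGen → Prop
  | k1inv : VRel r s (ι ℂ VGen.k1 * ι ℂ VGen.k1') 1
  | k1inv' : VRel r s (ι ℂ VGen.k1' * ι ℂ VGen.k1) 1
  | k2inv : VRel r s (ι ℂ VGen.k2 * ι ℂ VGen.k2') 1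
  | k2inv' : VRel r s (ι ℂ VGen.k2' * ι ℂ VGen.k2) 1
  | kcomm : VRel r s (ι ℂ VGen.k1 * ι ℂ VGen.k2) (ι ℂ VGen.k2 * ι ℂ VGen.k1)
  | k1e1 : VRel r s (ι ℂ VGen.k1 * ι ℂ VGen.e1)
      ((r⁻¹ * s⁻¹ ^ 2) • (ι ℂ VGen.e1 * ι ℂ VGen.k1))
  | k1e2 : VRel r s (ι ℂ VGen.k1 * ι ℂ VGen.e2)
      ((r ^ 3 * s ^ 3) • (ι ℂ VGen.e2 * ι ℂ VGen.k1))
  | k2e1 : VRel r s (ι ℂ VGen.k2 * ι ℂ VGen.e1)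
      ((r⁻¹ ^ 3 * s⁻¹ ^ 3) • (ι ℂ VGen.e1 * ι ℂ VGen.k2))
  | k2e2 : VRel r s (ι ℂ VGen.k2 * ι ℂ VGen.e2)
      ((r ^ 6 * s ^ 3) • (ι ℂ VGen.e2 * ι ℂ VGen.k2))
  | serre1 : VRel r s
      (ι ℂ VGen.e2 ^ 2 * ι ℂ VGen.e1
        - (r⁻¹ ^ 3 + s⁻¹ ^ 3) • (ι ℂ VGen.e2 * ι ℂ VGen.e1 * ι ℂ VGen.e2)
        + (r⁻¹ ^ 3 * s⁻¹ ^ 3) • (ι ℂ VGen.e1 * ι ℂ VGen.e2 ^ 2)) 0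
  | serre2 : VRel r s
      (ι ℂ VGen.e1 ^ 4 * ι ℂ VGen.e2
        - ((r + s) * (r ^ 2 + s ^ 2)) • (ι ℂ VGen.e1 ^ 3 * ι ℂ VGen.e2 * ι ℂ VGen.e1)
        + (r * s * (r ^ 2 + r * s + s ^ 2)) •
            (ι ℂ VGen.e1 ^ 2 * ι ℂ VGen.e2 * ι ℂ VGen.e1 ^ 2)
        - (r ^ 3 * s ^ 3 * (r + s) * (r ^ 2 + s ^ 2)) •
            (ι ℂ VGen.e1 * ι ℂ VGen.e2 * ι ℂ VGen.e1 ^ 3)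
        + (r ^ 6 * s ^ 6) • (ι ℂ VGen.e2 * ι ℂ VGen.e1 ^ 4)) 0

/-- The two-parameter Hopf algebra `𝒱 = Ǔ_{r,s}^{≥0}(G₂)` as a quotient of the free algebra. -/
def V (r s : ℂ) : Type := RingQuot (VRel r s)

instance (r s : ℂ) : Ring (V r s) := inferInstanceAs (Ring (RingQuot (VRel r s)))
instance (r s : ℂ) : Algebra ℂ (V r s) := inferInstanceAs (Algebra ℂ (RingQuot (VRel r s)))

namespace V

variable (r s : ℂ)

/-- The image of a generator in `𝒱`. -/
def gen (g : VGen) : V r s := RingQuot.mkAlgHom ℂ (VRel r s) (FreeAlgebra.ι ℂ g)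

def e1 : V r s := gen r s VGen.e1
def e2 : V r s := gen r s VGen.e2

/-- `k₁` as a unit of `𝒱`. -/
def K1 : (V r s)ˣ where
  val := gen r s VGen.k1
  inv := gen r s VGen.k1'
  val_inv := by
    have h := RingQuot.mkAlgHom_rel ℂ (VRel.k1inv (r := r) (s := s))
    simp only [map_mul, map_one] at h
    exact h
  inv_val := by
    have h := RingQuot.mkAlgHom_rel ℂ (VRel.k1inv' (r := r) (s := s))
    simp only [map_mul, map_one] at h
    exact h

/-- `k₂` as a unit of `𝒱`. -/
def K2 : (V r s)ˣ where
  val := gen r s VGen.k2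
  inv := gen r s VGen.k2'
  val_inv := by
    have h := RingQuot.mkAlgHom_rel ℂ (VRel.k2inv (r := r) (s := s))
    simp only [map_mul, map_one] at h
    exact h
  inv_val := by
    have h := RingQuot.mkAlgHom_rel ℂ (VRel.k2inv' (r := r) (s := s))
    simp only [map_mul, map_one] at h
    exact h

/-- `k₁` as an element of `𝒱`. -/
def k1 : V r s := (K1 r s : V r s)

/-- `k₂` as an element of `𝒱`. -/
def k2 : V r s := (K2 r s : V r s)

/-- The element `k₁^m k₂^n` of `𝒱`, for integers `m n`. -/
def kk (m n : ℤ) : V r s := ((K1 r s ^ m * K2 r s ^ n : (V r s)ˣ) : V r s)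

/-- The PBW generators `X₁, …, X₆`. -/
def X1 : V r s := e2 r s
def X6 : V r s := e1 r s
def X2 : V r s := e1 r s * e2 r s - s ^ 3 • (e2 r s * e1 r s)
def X4 : V r s := e1 r s * X2 r s - (r * s ^ 2) • (X2 r s * e1 r s)
def X5 : V r s := e1 r s * X4 r s - (r ^ 2 * s) • (X4 r s * e1 r s)
def X3 : V r s := X4 r s * X2 r s - (r ^ 2 * s) • (X2 r s * X4 r s)

/-- The ordered monomial `X₁^a X₂^b X₃^c X₄^d X₅^e X₆^f`. -/
def Xmon (a b c d e f : ℕ) : V r s :=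
  X1 r s ^ a * X2 r s ^ b * X3 r s ^ c * X4 r s ^ d * X5 r s ^ e * X6 r s ^ f

/-- Commutation predicate: `k * a = c • (a * k)`. -/
def Cm (k a : V r s) (c : ℂ) : Prop := k * a = c • (a * k)

variable {r s}

lemma Cm.mul_right {k a b : V r s} {c d : ℂ} (ha : Cm r s k a c) (hb : Cm r s k b d) :
    Cm r s k (a * b) (c * d) := by
  unfold Cm at *
  rw [← mul_assoc, ha, smul_mul_assoc, mul_assoc, hb, mul_smul_comm, smul_smul, mul_assoc]

lemma Cm.mul_left {k k' a : V r s} {c d : ℂ} (ha : Cm r s k a c) (hb : Cm r s k' a d) :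
    Cm r s (k * k') a (c * d) := by
  unfold Cm at *
  rw [mul_assoc, hb, mul_smul_comm, ← mul_assoc, ha]
  simp [smul_mul_assoc, smul_smul, mul_assoc, mul_comm]

lemma Cm.smul_sub {k a b : V r s} {c d : ℂ} (ha : Cm r s k a c) (hb : Cm r s k b c) :
    Cm r s k (a - d • b) c := by
  unfold Cm at *
  simp only [mul_sub, sub_mul, smul_sub, ha, hb, mul_smul_comm, smul_mul_assoc, smul_smul]
  rw [_root_.smul_sub, smul_smul, mul_comm c d]

lemma Cm.one {k : V r s} : Cm r s k 1 1 := by simp [Cm]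

lemma Cm.pow {k a : V r s} {c : ℂ} (ha : Cm r s k a c) (n : ℕ) :
    Cm r s k (a ^ n) (c ^ n) := by
  induction n with
  | zero => simpa using Cm.one
  | succ n ih => rw [pow_succ, pow_succ]; exact ih.mul_right ha

lemma Cm.unit_pow {K : (V r s)ˣ} {a : V r s} {c : ℂ} (ha : Cm r s (↑K) a c) (n : ℕ) :
    Cm r s (↑(K ^ n)) a (c ^ n) := by
  induction n with
  | zero => simp [Cm]
  | succ n ih =>
    rw [pow_succ, pow_succ, Units.val_mul]
    exact ih.mul_left ha

lemma Cm.unit_inv {K : (V r s)ˣ} {a : V r s} {c : ℂ} (hc : c ≠ 0)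
    (ha : Cm r s (↑K) a c) : Cm r s (↑K⁻¹) a c⁻¹ := by
  unfold Cm at *
  have h1 : a * ↑K⁻¹ = c • (↑K⁻¹ * a) := by
    have h := congrArg (fun z => (↑K⁻¹ : V r s) * z * ↑K⁻¹) ha
    simpa [mul_assoc, mul_smul_comm, smul_mul_assoc, Units.inv_mul_cancel_left,
      Units.mul_inv, mul_one] using h
  rw [h1, smul_smul, inv_mul_cancel₀ hc, one_smul]

lemma Cm.unit_zpow {K : (V r s)ˣ} {a : V r s} {c : ℂ} (hc : c ≠ 0)
    (ha : Cm r s (↑K) a c) (x : ℤ) : Cm r s (↑(K ^ x)) a (c ^ x) := by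
  cases x with
  | ofNat n => simpa [zpow_natCast] using ha.unit_pow n
  | negSucc n =>
    rw [zpow_negSucc, zpow_negSucc]
    exact (ha.unit_pow (n + 1)).unit_inv (pow_ne_zero _ hc)

lemma Cm.congr {k a : V r s} {c c' : ℂ} (h : Cm r s k a c) (e : c = c') :
    Cm r s k a c' := e ▸ h

variable (r s) in
/-- The scalar `r^m s^n`. -/
def cs (m n : ℤ) : ℂ := r ^ m * s ^ n

lemma cs_ne (hr : r ≠ 0) (hs : s ≠ 0) (m n : ℤ) : cs r s m n ≠ 0 :=
  mul_ne_zero (zpow_ne_zero _ hr) (zpow_ne_zero _ hs)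

lemma cs_mul (hr : r ≠ 0) (hs : s ≠ 0) (m n m' n' : ℤ) :
    cs r s m n * cs r s m' n' = cs r s (m + m') (n + n') := by
  simp only [cs, zpow_add₀ hr, zpow_add₀ hs]; ring

lemma cs_zpow (hr : r ≠ 0) (hs : s ≠ 0) (m n x : ℤ) :
    cs r s m n ^ x = cs r s (m * x) (n * x) := by
  simp only [cs, mul_zpow, ← zpow_mul]

lemma cs_npow (hr : r ≠ 0) (hs : s ≠ 0) (m n : ℤ) (k : ℕ) :
    cs r s m n ^ k = cs r s (m * k) (n * k) := by
  rw [← zpow_natCast (cs r s m n) k, cs_zpow hr hs]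

lemma cm_k1_e1 : Cm r s (k1 r s) (e1 r s) (r⁻¹ * s⁻¹ ^ 2) := by
  have h := RingQuot.mkAlgHom_rel ℂ (VRel.k1e1 (r := r) (s := s))
  simp only [map_mul, map_smul] at h
  exact h

lemma cm_k1_e2 : Cm r s (k1 r s) (e2 r s) (r ^ 3 * s ^ 3) := by
  have h := RingQuot.mkAlgHom_rel ℂ (VRel.k1e2 (r := r) (s := s))
  simp only [map_mul, map_smul] at h
  exact h

lemma cm_k2_e1 : Cm r s (k2 r s) (e1 r s) (r⁻¹ ^ 3 * s⁻¹ ^ 3) := by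
  have h := RingQuot.mkAlgHom_rel ℂ (VRel.k2e1 (r := r) (s := s))
  simp only [map_mul, map_smul] at h
  exact h

lemma cm_k2_e2 : Cm r s (k2 r s) (e2 r s) (r ^ 6 * s ^ 3) := by
  have h := RingQuot.mkAlgHom_rel ℂ (VRel.k2e2 (r := r) (s := s))
  simp only [map_mul, map_smul] at h
  exact h

section
variable (hr : r ≠ 0) (hs : s ≠ 0)
include hr hs

lemma cm_k1_X6 : Cm r s (k1 r s) (X6 r s) (cs r s (-1) (-2)) := by
  unfold X6
  exact cm_k1_e1.congr (by simp only [cs, zpow_ofNat, zpow_neg] <;> field_simp <;> try ring)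

lemma cm_k1_X1 : Cm r s (k1 r s) (X1 r s) (cs r s 3 3) := by
  unfold X1
  exact cm_k1_e2.congr (by simp only [cs, zpow_ofNat, zpow_neg] <;> field_simp <;> try ring)

lemma cm_k1_X2 : Cm r s (k1 r s) (X2 r s) (cs r s 2 1) := by
  unfold X2
  exact Cm.smul_sub
    ((cm_k1_e1.mul_right cm_k1_e2).congr
      (by simp only [cs, zpow_ofNat, zpow_neg] <;> field_simp <;> try ring))
    ((cm_k1_e2.mul_right cm_k1_e1).congr
      (by simp only [cs, zpow_ofNat, zpow_neg] <;> field_simp <;> try ring))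

lemma cm_k1_X4 : Cm r s (k1 r s) (X4 r s) (cs r s 1 (-1)) := by
  unfold X4
  exact Cm.smul_sub
    ((cm_k1_e1.mul_right (cm_k1_X2 hr hs)).congr
      (by simp only [cs, zpow_ofNat, zpow_neg] <;> field_simp <;> try ring))
    (((cm_k1_X2 hr hs).mul_right cm_k1_e1).congr
      (by simp only [cs, zpow_ofNat, zpow_neg] <;> field_simp <;> try ring))

lemma cm_k1_X5 : Cm r s (k1 r s) (X5 r s) (cs r s 0 (-3)) := by
  unfold X5
  exact Cm.smul_sub
    ((cm_k1_e1.mul_right (cm_k1_X4 hr hs)).congr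
      (by simp only [cs, zpow_ofNat, zpow_neg] <;> field_simp <;> try ring))
    (((cm_k1_X4 hr hs).mul_right cm_k1_e1).congr
      (by simp only [cs, zpow_ofNat, zpow_neg] <;> field_simp <;> try ring))

lemma cm_k1_X3 : Cm r s (k1 r s) (X3 r s) (cs r s 3 0) := by
  unfold X3
  exact Cm.smul_sub
    (((cm_k1_X4 hr hs).mul_right (cm_k1_X2 hr hs)).congr
      (by simp only [cs, zpow_ofNat, zpow_neg] <;> field_simp <;> try ring))
    (((cm_k1_X2 hr hs).mul_right (cm_k1_X4 hr hs)).congr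
      (by simp only [cs, zpow_ofNat, zpow_neg] <;> field_simp <;> try ring))

lemma cm_k2_X6 : Cm r s (k2 r s) (X6 r s) (cs r s (-3) (-3)) := by
  unfold X6
  exact cm_k2_e1.congr (by simp only [cs, zpow_ofNat, zpow_neg] <;> field_simp <;> try ring)

lemma cm_k2_X1 : Cm r s (k2 r s) (X1 r s) (cs r s 6 3) := by
  unfold X1
  exact cm_k2_e2.congr (by simp only [cs, zpow_ofNat, zpow_neg] <;> field_simp <;> try ring)

lemma cm_k2_X2 : Cm r s (k2 r s) (X2 r s) (cs r s 3 0) := by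
  unfold X2
  exact Cm.smul_sub
    ((cm_k2_e1.mul_right cm_k2_e2).congr
      (by simp only [cs, zpow_ofNat, zpow_neg] <;> field_simp <;> try ring))
    ((cm_k2_e2.mul_right cm_k2_e1).congr
      (by simp only [cs, zpow_ofNat, zpow_neg] <;> field_simp <;> try ring))

lemma cm_k2_X4 : Cm r s (k2 r s) (X4 r s) (cs r s 0 (-3)) := by
  unfold X4
  exact Cm.smul_sub
    ((cm_k2_e1.mul_right (cm_k2_X2 hr hs)).congr
      (by simp only [cs, zpow_ofNat, zpow_neg] <;> field_simp <;> try ring))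
    (((cm_k2_X2 hr hs).mul_right cm_k2_e1).congr
      (by simp only [cs, zpow_ofNat, zpow_neg] <;> field_simp <;> try ring))

lemma cm_k2_X5 : Cm r s (k2 r s) (X5 r s) (cs r s (-3) (-6)) := by
  unfold X5
  exact Cm.smul_sub
    ((cm_k2_e1.mul_right (cm_k2_X4 hr hs)).congr
      (by simp only [cs, zpow_ofNat, zpow_neg] <;> field_simp <;> try ring))
    (((cm_k2_X4 hr hs).mul_right cm_k2_e1).congr
      (by simp only [cs, zpow_ofNat, zpow_neg] <;> field_simp <;> try ring))

lemma cm_k2_X3 : Cm r s (k2 r s) (X3 r s) (cs r s 3 (-3)) := by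
  unfold X3
  exact Cm.smul_sub
    (((cm_k2_X4 hr hs).mul_right (cm_k2_X2 hr hs)).congr
      (by simp only [cs, zpow_ofNat, zpow_neg] <;> field_simp <;> try ring))
    (((cm_k2_X2 hr hs).mul_right (cm_k2_X4 hr hs)).congr
      (by simp only [cs, zpow_ofNat, zpow_neg] <;> field_simp <;> try ring))

lemma cm_kk {a : V r s} {m n m' n' : ℤ} (h1 : Cm r s (k1 r s) a (cs r s m n))
    (h2 : Cm r s (k2 r s) a (cs r s m' n')) (x y : ℤ) :
    Cm r s (kk r s x y) a (cs r s (m * x + m' * y) (n * x + n' * y)) := by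
  have hx := h1.unit_zpow (cs_ne hr hs m n) x
  have hy := h2.unit_zpow (cs_ne hr hs m' n') y
  have h := hx.mul_left hy
  rw [← Units.val_mul] at h
  exact h.congr (by rw [cs_zpow hr hs, cs_zpow hr hs, cs_mul hr hs])

end
end V

theorem stmt5 (r s : ℂ) (hr : r ≠ 0) (hs : s ≠ 0)
    (hrs : ∀ m n : ℤ, r ^ m * s ^ n = 1 → m = 0 ∧ n = 0) :
    ∀ (x y : ℤ) (b1 b2 b3 b4 b5 b6 : ℕ),
      V.kk r s x y * V.Xmon r s b1 b2 b3 b4 b5 b6 =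
        (r ^ (x * (3 * (b1 : ℤ) + 2 * b2 + 3 * b3 + b4 - b6)
              + y * (6 * (b1 : ℤ) + 3 * b2 + 3 * b3 - 3 * b5 - 3 * b6)) *
         s ^ (x * (3 * (b1 : ℤ) + b2 - b4 - 3 * b5 - 2 * b6)
              + y * (3 * (b1 : ℤ) - 3 * b3 - 3 * b4 - 6 * b5 - 3 * b6))) •
          (V.Xmon r s b1 b2 b3 b4 b5 b6 * V.kk r s x y) := by
  intro x y b1 b2 b3 b4 b5 b6
  have c1 := ((V.cm_kk hr hs (V.cm_k1_X1 hr hs) (V.cm_k2_X1 hr hs) x y).pow b1).congr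
    (V.cs_npow hr hs _ _ b1)
  have c2 := ((V.cm_kk hr hs (V.cm_k1_X2 hr hs) (V.cm_k2_X2 hr hs) x y).pow b2).congr
    (V.cs_npow hr hs _ _ b2)
  have c3 := ((V.cm_kk hr hs (V.cm_k1_X3 hr hs) (V.cm_k2_X3 hr hs) x y).pow b3).congr
    (V.cs_npow hr hs _ _ b3)
  have c4 := ((V.cm_kk hr hs (V.cm_k1_X4 hr hs) (V.cm_k2_X4 hr hs) x y).pow b4).congr
    (V.cs_npow hr hs _ _ b4)
  have c5 := ((V.cm_kk hr hs (V.cm_k1_X5 hr hs) (V.cm_k2_X5 hr hs) x y).pow b5).congr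
    (V.cs_npow hr hs _ _ b5)
  have c6 := ((V.cm_kk hr hs (V.cm_k1_X6 hr hs) (V.cm_k2_X6 hr hs) x y).pow b6).congr
    (V.cs_npow hr hs _ _ b6)
  have h := ((((c1.mul_right c2).mul_right c3).mul_right c4).mul_right c5).mul_right c6
  unfold V.Cm at h
  unfold V.Xmon
  rw [h]
  congr 1
  simp only [V.cs_mul hr hs]
  simp only [V.cs]
  congr 1 <;> push_cast <;> ring
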